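/- Spectrum of the covariance matrix in the dependent example: Let n ≥ 2 be an integer and s > 0. Let Σ be the n²×n² real matrix indexed by ordered pairs (i,j) ∈ [n]², with entries Σ_{(i,j),(k,l)} = s²·(δ_{ik} + δ_{il} + δ_{jk} + δ_{jl}), where δ is the Kronecker delta (this is the covariance matrix of the random matrix W with W_{i,j} = ξ_i + ξ_j for i.i.d. ξ_v ~ N(0,s²)). Then Σ is symmetric positive semidefinite of rank n; its nonzero eigenvalues are 2ns² with multiplicity n − 1 and 4ns² with multiplicity 1; and the vector (1/n, …, 1/n)ᵗ ∈ ℝ^{n²} is an eigenvector of Σ with eigenvalue 4ns². -/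

import Mathlib

open Matrix

noncomputable section

def SigmaEx (n : ℕ) (s : ℝ) : Matrix (Fin n × Fin n) (Fin n × Fin n) ℝ :=
  fun q r => s ^ 2 * ((if q.1 = r.1 then (1 : ℝ) else 0) + (if q.1 = r.2 then 1 else 0)
    + (if q.2 = r.1 then 1 else 0) + (if q.2 = r.2 then 1 else 0))

namespace Stmt11

def Cmap (n : ℕ) : (Fin n → ℝ) →ₗ[ℝ] (Fin n × Fin n → ℝ) where
  toFun g := fun p => g p.1 + g p.2
  map_add' f g := by funext p; simp [Pi.add_apply]; ring
  map_smul' c g := by funext p; simp [smul_eq_mul, mul_add]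

def fS (n : ℕ) (x : Fin n × Fin n → ℝ) (v : Fin n) : ℝ :=
  (∑ l, x (v, l)) + (∑ k, x (k, v))

lemma double_ite {n : ℕ} (a : Fin n) (y : Fin n → Fin n → ℝ) :
    ∑ k, ∑ l, (if a = k then y k l else 0) = ∑ l, y a l := by
  rw [Finset.sum_comm]
  simp [Finset.sum_ite_eq]

lemma sigma_mulVec (n : ℕ) (s : ℝ) (x : Fin n × Fin n → ℝ) :
    SigmaEx n s *ᵥ x = fun p => s ^ 2 * (fS n x p.1 + fS n x p.2) := by
  funext p
  simp only [SigmaEx, mulVec, dotProduct, fS, Fintype.sum_prod_type, mul_assoc,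
    ← Finset.mul_sum, add_mul, Finset.sum_add_distrib, ite_mul, one_mul, zero_mul,
    Finset.sum_ite_eq, Finset.sum_ite_eq', Finset.mem_univ, if_true]
  rw [double_ite, double_ite]
  ring


lemma fS_C (n : ℕ) (g : Fin n → ℝ) (v : Fin n) :
    fS n (Cmap n g) v = 2 * n * g v + 2 * ∑ w, g w := by
  simp only [fS, Cmap, LinearMap.coe_mk, AddHom.coe_mk, Finset.sum_add_distrib,
    Finset.sum_const, Finset.card_univ, Fintype.card_fin, nsmul_eq_mul]
  ring

lemma sigma_C (n : ℕ) (s : ℝ) (g : Fin n → ℝ) :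
    SigmaEx n s *ᵥ (Cmap n g)
      = fun p => s ^ 2 * (2 * n * (g p.1 + g p.2) + 4 * ∑ w, g w) := by
  rw [sigma_mulVec]
  funext p
  simp only [fS_C]
  ring

lemma C_apply (n : ℕ) (g : Fin n → ℝ) (p : Fin n × Fin n) :
    Cmap n g p = g p.1 + g p.2 := rfl

lemma C_inj (n : ℕ) : Function.Injective (Cmap n) := by
  rw [injective_iff_map_eq_zero]
  intro g hg
  funext v
  have := congrFun hg (v, v)
  simp only [C_apply, Pi.zero_apply] at this ⊢
  linarith

/-- Structure of eigenvectors for nonzero eigenvalues. -/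
lemma eigen_struct {n : ℕ} {s μ : ℝ} {x : Fin n × Fin n → ℝ} (hμ : μ ≠ 0)
    (hx : SigmaEx n s *ᵥ x = μ • x) :
    ∃ g : Fin n → ℝ, x = Cmap n g ∧
      ∀ i j : Fin n, s ^ 2 * (2 * n * (g i + g j) + 4 * ∑ w, g w)
        = μ * (g i + g j) := by
  refine ⟨fun v => s ^ 2 * fS n x v / μ, ?_, ?_⟩
  · funext p
    have h := congrFun hx p
    rw [sigma_mulVec] at h
    simp only [Pi.smul_apply, smul_eq_mul] at h
    simp only [C_apply]
    field_simp
    linarith [h]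
  · intro i j
    set g : Fin n → ℝ := fun v => s ^ 2 * fS n x v / μ with hg
    have hxg : x = Cmap n g := by
      funext p
      have h := congrFun hx p
      rw [sigma_mulVec] at h
      simp only [Pi.smul_apply, smul_eq_mul] at h
      simp only [C_apply, hg]
      field_simp
      linarith [h]
    have h1 : SigmaEx n s *ᵥ x = SigmaEx n s *ᵥ (Cmap n g) := by rw [hxg]
    rw [sigma_C, hx] at h1
    have h2 := congrFun h1.symm (i, j)
    simp only [Pi.smul_apply, smul_eq_mul, hxg, C_apply] at h2
    exact h2


lemma quad (n : ℕ) (s : ℝ) (x : Fin n × Fin n → ℝ) :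
    x ⬝ᵥ (SigmaEx n s *ᵥ x) = s ^ 2 * ∑ v, (fS n x v) ^ 2 := by
  rw [sigma_mulVec]
  simp only [dotProduct, Fintype.sum_prod_type]
  have A : ∑ i, ∑ j, x (i, j) * (s ^ 2 * (fS n x i + fS n x j))
      = s ^ 2 * ((∑ i, ∑ j, x (i, j) * fS n x i) + (∑ i, ∑ j, x (i, j) * fS n x j)) := by
    rw [mul_add, Finset.mul_sum, Finset.mul_sum, ← Finset.sum_add_distrib]
    refine Finset.sum_congr rfl fun i _ => ?_
    rw [Finset.mul_sum, Finset.mul_sum, ← Finset.sum_add_distrib]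
    refine Finset.sum_congr rfl fun j _ => ?_
    ring
  rw [A]
  congr 1
  rw [Finset.sum_comm (f := fun i j => x (i, j) * fS n x j), ← Finset.sum_add_distrib]
  refine Finset.sum_congr rfl fun v _ => ?_
  rw [← Finset.sum_mul, ← Finset.sum_mul, ← add_mul, fS]
  ring


def sumF (n : ℕ) : (Fin n → ℝ) →ₗ[ℝ] ℝ where
  toFun g := ∑ v, g v
  map_add' f g := by simp [Finset.sum_add_distrib]
  map_smul' c g := by simp [Finset.mul_sum]

lemma sigma_const (n : ℕ) (s c : ℝ) :
    SigmaEx n s *ᵥ (fun _ : Fin n × Fin n => c) = fun _ => 4 * n * s ^ 2 * c := by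
  rw [sigma_mulVec]
  funext p
  simp [fS, Finset.sum_const, Finset.card_univ]
  ring

end Stmt11

open Stmt11 in
theorem stmt_11 (n : ℕ) (hn : 2 ≤ n) (s : ℝ) (hs : 0 < s) :
    (SigmaEx n s).PosSemidef ∧
    (SigmaEx n s).rank = n ∧
    Module.finrank ℝ
        (Module.End.eigenspace (Matrix.mulVecLin (SigmaEx n s)) (2 * n * s ^ 2))
      = n - 1 ∧
    Module.finrank ℝ
        (Module.End.eigenspace (Matrix.mulVecLin (SigmaEx n s)) (4 * n * s ^ 2))
      = 1 ∧
    (∀ μ : ℝ, Module.End.HasEigenvalue (Matrix.mulVecLin (SigmaEx n s)) μ →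
      μ = 0 ∨ μ = 2 * n * s ^ 2 ∨ μ = 4 * n * s ^ 2) ∧
    (SigmaEx n s) *ᵥ (fun _ : Fin n × Fin n => 1 / (n : ℝ))
      = (4 * n * s ^ 2) • (fun _ : Fin n × Fin n => 1 / (n : ℝ)) := by
  have hnR : (0:ℝ) < n := by exact_mod_cast (by omega : 0 < n)
  have hn0 : (n:ℝ) ≠ 0 := ne_of_gt hnR
  have hs2 : (0:ℝ) < s ^ 2 := by positivity
  have i0 : Fin n := ⟨0, by omega⟩
  -- PSD
  have psd : (SigmaEx n s).PosSemidef := by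
    rw [posSemidef_iff_dotProduct_mulVec]
    constructor
    · show (SigmaEx n s)ᴴ = SigmaEx n s
      ext p q
      simp only [conjTranspose_apply, star_trivial, SigmaEx]
      have hc : ∀ a b : Fin n, (if a = b then (1:ℝ) else 0) = (if b = a then 1 else 0) := by
        intro a b; simp [eq_comm]
      rw [hc q.1 p.1, hc q.1 p.2, hc q.2 p.1, hc q.2 p.2]
      ring
    · intro x
      simp only [star_trivial]
      rw [quad]
      positivity
  -- range = range Cmap
  have hrange : LinearMap.range (SigmaEx n s).mulVecLin = LinearMap.range (Cmap n) := by
    apply le_antisymm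
    · rintro y ⟨x, rfl⟩
      refine ⟨fun v => s ^ 2 * fS n x v, ?_⟩
      funext p
      rw [C_apply, mulVecLin_apply, sigma_mulVec]
      ring
    · rintro y ⟨g, rfl⟩
      set S := ∑ w, g w with hS
      set h : Fin n → ℝ := fun v => g v / (2 * n * s ^ 2) - S / (4 * n ^ 2 * s ^ 2) with hh
      have hT : ∑ v, h v = S / (4 * n * s ^ 2) := by
        simp only [hh, Finset.sum_sub_distrib, ← Finset.sum_div, Finset.sum_const,
          Finset.card_univ, Fintype.card_fin, nsmul_eq_mul, ← hS]
        field_simp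
        ring
      refine ⟨Cmap n h, ?_⟩
      rw [mulVecLin_apply, sigma_C, hT]
      funext p
      rw [C_apply]
      simp only [hh]
      field_simp
      ring
  have hμ2 : (2 * n * s ^ 2 : ℝ) ≠ 0 := by positivity
  have hμ4 : (4 * n * s ^ 2 : ℝ) ≠ 0 := by positivity
  -- eigenspace 2ns²
  have E2 : Module.End.eigenspace (Matrix.mulVecLin (SigmaEx n s)) (2 * n * s ^ 2)
      = Submodule.map (Cmap n) (LinearMap.ker (sumF n)) := by
    ext x
    rw [Module.End.mem_eigenspace_iff, Submodule.mem_map]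
    constructor
    · intro hx
      rw [mulVecLin_apply] at hx
      obtain ⟨g, rfl, key⟩ := eigen_struct hμ2 hx
      have hfac : 4 * s ^ 2 * (∑ w, g w) = 0 := by linear_combination key i0 i0
      have hker : (∑ w, g w) = 0 := by
        rcases mul_eq_zero.mp hfac with h | h
        · exact absurd h (by positivity)
        · exact h
      exact ⟨g, by simpa [sumF, LinearMap.mem_ker] using hker, rfl⟩
    · rintro ⟨g, hg, rfl⟩
      have hg0 : ∑ w, g w = 0 := by simpa [sumF, LinearMap.mem_ker] using hg
      rw [mulVecLin_apply, sigma_C, hg0]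
      funext p
      simp only [Pi.smul_apply, smul_eq_mul, C_apply]
      ring
  have dim2 : Module.finrank ℝ
      (Module.End.eigenspace (Matrix.mulVecLin (SigmaEx n s)) (2 * n * s ^ 2)) = n - 1 := by
    rw [E2, ← LinearEquiv.finrank_eq
      (Submodule.equivMapOfInjective (Cmap n) (C_inj n) (LinearMap.ker (sumF n)))]
    have hsurj : Function.Surjective (sumF n) := by
      intro c
      refine ⟨fun _ => c / n, ?_⟩
      simp [sumF, Finset.sum_const, Finset.card_univ]
      field_simp
    have hadd := LinearMap.finrank_range_add_finrank_ker (sumF n)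
    rw [LinearMap.range_eq_top.mpr hsurj, finrank_top, Module.finrank_self,
      Module.finrank_fin_fun] at hadd
    omega
  -- eigenspace 4ns²
  have E4 : Module.End.eigenspace (Matrix.mulVecLin (SigmaEx n s)) (4 * n * s ^ 2)
      = Submodule.span ℝ {fun _ : Fin n × Fin n => (1:ℝ)} := by
    apply le_antisymm
    · intro x hx
      rw [Module.End.mem_eigenspace_iff, mulVecLin_apply] at hx
      obtain ⟨g, rfl, key⟩ := eigen_struct hμ4 hx
      set S := ∑ w, g w with hS
      rw [Submodule.mem_span_singleton]
      refine ⟨2 * S / n, ?_⟩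
      funext p
      have h2 : (2 * s ^ 2) * (n * (g p.1 + g p.2)) = (2 * s ^ 2) * (2 * S) := by
        linear_combination -1 * key p.1 p.2
      have h3 := mul_left_cancel₀ (by positivity : (2 * s ^ 2 : ℝ) ≠ 0) h2
      simp only [Pi.smul_apply, smul_eq_mul, mul_one, C_apply]
      rw [eq_comm, eq_div_iff hn0]
      linarith
    · rw [Submodule.span_le, Set.singleton_subset_iff]
      rw [SetLike.mem_coe, Module.End.mem_eigenspace_iff, mulVecLin_apply, sigma_const]
      funext p
      simp
  have dim4 : Module.finrank ℝ
      (Module.End.eigenspace (Matrix.mulVecLin (SigmaEx n s)) (4 * n * s ^ 2)) = 1 := by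
    rw [E4]
    apply finrank_span_singleton
    intro h
    have := congrFun h (i0, i0)
    simp at this
  refine ⟨psd, ?_, dim2, dim4, ?_, ?_⟩
  · -- rank
    rw [Matrix.rank, hrange, LinearMap.finrank_range_of_inj (C_inj n), Module.finrank_fin_fun]
  · -- eigenvalues
    intro μ hμ
    by_cases h0 : μ = 0
    · exact Or.inl h0
    by_cases h2 : μ = 2 * n * s ^ 2
    · exact Or.inr (Or.inl h2)
    by_cases h4 : μ = 4 * n * s ^ 2
    · exact Or.inr (Or.inr h4)
    exfalso
    obtain ⟨x, hmem, hne⟩ := hμ.exists_hasEigenvector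
    rw [Module.End.mem_eigenspace_iff, mulVecLin_apply] at hmem
    obtain ⟨g, rfl, key⟩ := eigen_struct h0 hmem
    have hgeq : ∀ i, g i = g i0 := by
      intro i
      have hfac : (4 * n * s ^ 2 - 2 * μ) * (g i - g i0) = 0 := by
        linear_combination key i i - key i0 i0
      rcases mul_eq_zero.mp hfac with h | h
      · exact absurd (by linarith : μ = 2 * n * s ^ 2) h2
      · linarith
    have hSg : ∑ w, g w = n * g i0 := by
      rw [Finset.sum_congr rfl fun w _ => hgeq w]
      simp [Finset.sum_const, Finset.card_univ, mul_comm]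
    have h00 := key i0 i0
    rw [hSg] at h00
    have hg0 : g i0 = 0 := by
      have hfac : (8 * n * s ^ 2 - 2 * μ) * g i0 = 0 := by linear_combination h00
      rcases mul_eq_zero.mp hfac with h | h
      · exact absurd (by linarith : μ = 4 * n * s ^ 2) h4
      · exact h
    apply hne
    have : g = 0 := by funext v; rw [hgeq v, hg0]; rfl
    rw [this, map_zero]
  · -- eigenvector 1/n
    rw [sigma_const]
    funext p
    simp only [Pi.smul_apply, smul_eq_mul]
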